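/- Strict decrease of the measure across a completed local diagram: for all words δ₀, γ₁, δ₁, γ₂ over P with γ₁ nonempty, if |γ₁δ₁| ≼′ |δ₀| + |γ₁|, then |δ₁| + |γ₂| ≺′ |δ₀| + |γ₁γ₂|, where juxtaposition of words denotes concatenation. -/

import Mathlib

/-- The measure of a word over `P` with respect to a strict order `lt` on `P`,
valued in finitely supported multisets `P →₀ ℕ`: `|ε| = 0` and
`|I σ| = δ_I + |σ^(I)|`, where `σ^(I)` is `σ` with every letter `lt`-below `I`
removed. -/
noncomputable def wordMeas {P : Type*} (lt : P → P → Prop) : List P → (P →₀ ℕ)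
  | [] => 0
  | I :: σ =>
      Finsupp.single I 1 +
        wordMeas lt (σ.filter fun J => @decide (¬ lt J I) (Classical.propDecidable _))
termination_by l => l.length
decreasing_by
  simp only [List.length_cons]
  first
  | exact Nat.lt_succ_of_le (List.length_filter_le _ _)
  | exact Nat.lt_succ_of_le (by simpa using List.length_filter_le _ σ.attach)
  | (simp only [List.length_unattach]; exact Nat.lt_succ_of_le ((List.length_filter_le _ _).trans (le_of_eq List.length_attach)))

/-- The Dershowitz–Manna-style strict order on finitely supported multisets
`P →₀ ℕ` induced by a strict order `lt` on `P`. -/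
def DMLt {P : Type*} (lt : P → P → Prop) (M N : P →₀ ℕ) : Prop :=
  ∃ X Y Z : P →₀ ℕ, M = Z + X ∧ N = Z + Y ∧ Y ≠ 0 ∧
    ∀ I : P, X I ≠ 0 → ∃ J : P, Y J ≠ 0 ∧ lt I J

/-- The reflexive closure `≼′` of the Dershowitz–Manna-style order. -/
def DMLe {P : Type*} (lt : P → P → Prop) (M N : P →₀ ℕ) : Prop :=
  DMLt lt M N ∨ M = N

open scoped Classical

section Aux
variable {P : Type*} (lt : P → P → Prop)

/-- zero out entries strictly below `I`. -/
noncomputable def restrI (I : P) (ν : P →₀ ℕ) : P →₀ ℕ :=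
  ν.filter (fun K => ¬ lt K I)

lemma restrI_apply (I : P) (ν : P →₀ ℕ) (K : P) :
    restrI lt I ν K = if lt K I then 0 else ν K := by
  rw [restrI, Finsupp.filter_apply]
  split_ifs with h1 h2 h2 <;> first | rfl | exact absurd h2 h1 | exact absurd h1 h2

lemma restrI_add (I : P) (ν μ : P →₀ ℕ) :
    restrI lt I (ν + μ) = restrI lt I ν + restrI lt I μ := by
  ext K
  simp only [restrI_apply, Finsupp.add_apply]
  split_ifs <;> simp

lemma restrI_single_of_not_lt {I J : P} (h : ¬ lt J I) :
    restrI lt I (Finsupp.single J 1) = Finsupp.single J 1 :=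
  Finsupp.filter_single_of_pos _ h

lemma restrI_single_of_lt {I J : P} (h : lt J I) :
    restrI lt I (Finsupp.single J 1) = 0 :=
  Finsupp.filter_single_of_neg _ (by simpa using h)

lemma restrI_restrI (htrans : ∀ p q r : P, lt p q → lt q r → lt p r)
    {I J : P} (h : lt J I) (ν : P →₀ ℕ) :
    restrI lt I (restrI lt J ν) = restrI lt I ν := by
  ext K
  simp only [restrI_apply]
  split_ifs with h1 h2 <;> try rfl
  exact absurd (htrans _ _ _ h2 h) h1

/-- the key filter lemma: measure of a filtered word. -/
lemma meas_filter (htrans : ∀ p q r : P, lt p q → lt q r → lt p r) :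
    ∀ n (τ : List P), τ.length ≤ n → ∀ I : P,
    wordMeas lt (τ.filter fun J => @decide (¬ lt J I) (Classical.propDecidable _)) =
      restrI lt I (wordMeas lt τ) := by
  intro n
  induction n with
  | zero =>
    intro τ hτ I
    rw [List.length_eq_zero_iff.mp (Nat.le_zero.mp hτ)]
    simp only [List.filter_nil]
    rw [wordMeas, restrI, Finsupp.filter_zero]
  | succ n ih =>
    intro τ hτ I
    cases τ with
    | nil =>
      simp only [List.filter_nil]
      rw [wordMeas, restrI, Finsupp.filter_zero]
    | cons J τ' =>
      simp only [List.length_cons, Nat.succ_le_succ_iff] at hτ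
      by_cases hJI : lt J I
      · rw [List.filter_cons_of_neg (by simpa using hJI)]
        rw [ih τ' hτ I]
        rw [wordMeas, restrI_add, restrI_single_of_lt lt hJI, zero_add]
        rw [ih τ' hτ J]
        rw [restrI_restrI lt htrans hJI]
      · rw [List.filter_cons_of_pos (by simpa using hJI), wordMeas, wordMeas,
          restrI_add, restrI_single_of_not_lt lt hJI]
        congr 1
        rw [← ih (τ'.filter fun a => @decide (¬ lt a J) (Classical.propDecidable _))
              (le_trans (List.length_filter_le _ _) hτ) I]
        rw [List.filter_filter, List.filter_filter]
        exact congrArg (wordMeas lt) (List.filter_congr fun a _ => Bool.and_comm _ _)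

/-- iterated restriction along the letters of a word -/
noncomputable def restrW : List P → (P →₀ ℕ) → (P →₀ ℕ)
  | [], ν => ν
  | I :: σ, ν => restrI lt I (restrW σ ν)

lemma restrW_le (σ : List P) (ν : P →₀ ℕ) (K : P) : restrW lt σ ν K ≤ ν K := by
  induction σ with
  | nil => exact le_rfl
  | cons I σ ih =>
    rw [restrW, restrI_apply]
    split_ifs with h
    · exact Nat.zero_le _
    · exact ih

lemma restrW_changed (σ : List P) (ν : P →₀ ℕ) (K : P)
    (h : restrW lt σ ν K ≠ ν K) : ∃ I ∈ σ, lt K I := by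
  induction σ with
  | nil => exact absurd rfl h
  | cons I σ ih =>
    rw [restrW, restrI_apply] at h
    split_ifs at h with h1
    · exact ⟨I, List.mem_cons_self, h1⟩
    · obtain ⟨J, hJ, hlt⟩ := ih h
      exact ⟨J, List.mem_cons_of_mem _ hJ, hlt⟩

lemma meas_append (htrans : ∀ p q r : P, lt p q → lt q r → lt p r) (σ τ : List P) :
    wordMeas lt (σ ++ τ) = wordMeas lt σ + restrW lt σ (wordMeas lt τ) := by
  induction σ with
  | nil => rw [List.nil_append, wordMeas, restrW, zero_add]
  | cons I σ ih =>
    rw [List.cons_append, wordMeas, wordMeas]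
    rw [meas_filter lt htrans (σ ++ τ).length _ le_rfl I, ih, restrI_add, restrW]
    rw [meas_filter lt htrans σ.length σ le_rfl I, add_assoc]

lemma mem_dominated : ∀ n (σ : List P), σ.length ≤ n → ∀ I ∈ σ,
    ∃ J, wordMeas lt σ J ≠ 0 ∧ (I = J ∨ lt I J) := by
  intro n
  induction n with
  | zero =>
    intro σ hσ I hI
    rw [List.length_eq_zero_iff.mp (Nat.le_zero.mp hσ)] at hI
    exact absurd hI List.not_mem_nil
  | succ n ih =>
    intro σ hσ I hI
    cases σ with
    | nil => exact absurd hI List.not_mem_nil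
    | cons K σ' =>
      simp only [List.length_cons, Nat.succ_le_succ_iff] at hσ
      rcases List.mem_cons.mp hI with rfl | hI'
      · refine ⟨I, ?_, Or.inl rfl⟩
        rw [wordMeas, Finsupp.add_apply, Finsupp.single_eq_same]
        omega
      · by_cases hIK : lt I K
        · refine ⟨K, ?_, Or.inr hIK⟩
          rw [wordMeas, Finsupp.add_apply, Finsupp.single_eq_same]
          omega
        · have hmem : I ∈ σ'.filter fun J => @decide (¬ lt J K) (Classical.propDecidable _) := by
            rw [List.mem_filter]
            exact ⟨hI', by simpa using hIK⟩
          obtain ⟨J, hJ, hor⟩ := ih _ (le_trans (List.length_filter_le _ _) hσ) I hmem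
          refine ⟨J, ?_, hor⟩
          rw [wordMeas, Finsupp.add_apply]
          omega

lemma wordMeas_ne_zero (σ : List P) (hσ : σ ≠ []) : wordMeas lt σ ≠ 0 := by
  cases σ with
  | nil => exact absurd rfl hσ
  | cons I σ' =>
    intro h0
    have := congrArg (fun f => f I) h0
    simp only [wordMeas, Finsupp.add_apply, Finsupp.single_eq_same, Finsupp.coe_zero,
      Pi.zero_apply] at this
    omega

lemma DMLt_trans (htrans : ∀ p q r : P, lt p q → lt q r → lt p r)
    {M N O : P →₀ ℕ} (h1 : DMLt lt M N) (h2 : DMLt lt N O) : DMLt lt M O := by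
  obtain ⟨X₁, Y₁, Z₁, hM, hN₁, hY₁, hd₁⟩ := h1
  obtain ⟨X₂, Y₂, Z₂, hN₂, hO, hY₂, hd₂⟩ := h2
  set Z : P →₀ ℕ := Finsupp.zipWith min (min_self 0) Z₁ Z₂ with hZ
  have hZ₁ : ∀ K, Z K ≤ Z₁ K := fun K => by
    rw [hZ, Finsupp.zipWith_apply]; exact min_le_left _ _
  have hZ₂ : ∀ K, Z K ≤ Z₂ K := fun K => by
    rw [hZ, Finsupp.zipWith_apply]; exact min_le_right _ _
  have hZmin : ∀ K, Z K = Z₁ K ∨ Z K = Z₂ K := fun K => by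
    rw [hZ, Finsupp.zipWith_apply]; exact min_choice _ _
  have hNN : ∀ K, Z₁ K + Y₁ K = Z₂ K + X₂ K := fun K => by
    have := congrArg (fun f => f K) (hN₁.symm.trans hN₂)
    simpa using this
  refine ⟨(Z₁ - Z) + X₁, (Z₂ - Z) + Y₂, Z, ?_, ?_, ?_, ?_⟩
  · ext K
    have := congrArg (fun f => f K) hM
    simp only [Finsupp.add_apply, Finsupp.tsub_apply] at *
    have := hZ₁ K; omega
  · ext K
    have := congrArg (fun f => f K) hO
    simp only [Finsupp.add_apply, Finsupp.tsub_apply] at *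
    have := hZ₂ K; omega
  · intro h0
    apply hY₂
    ext K
    have := congrArg (fun f => f K) h0
    simp only [Finsupp.add_apply, Finsupp.tsub_apply, Finsupp.coe_zero, Pi.zero_apply] at this ⊢
    omega
  · intro I hI
    rw [Finsupp.add_apply, Finsupp.tsub_apply] at hI
    by_cases hX₁ : X₁ I ≠ 0
    · obtain ⟨J, hJ, hlt⟩ := hd₁ I hX₁
      by_cases hc : Z₂ J ≤ Z J
      · have hX₂J : X₂ J ≠ 0 := by have := hNN J; have := hZ₁ J; omega
        obtain ⟨K, hK, hltK⟩ := hd₂ J hX₂J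
        refine ⟨K, ?_, htrans _ _ _ hlt hltK⟩
        rw [Finsupp.add_apply, Finsupp.tsub_apply]
        omega
      · refine ⟨J, ?_, hlt⟩
        rw [Finsupp.add_apply, Finsupp.tsub_apply]
        omega
    · push_neg at hX₁
      have hZI : Z I < Z₁ I := by omega
      have hZ2I : Z₂ I = Z I := by rcases hZmin I with h | h <;> omega
      have hX₂I : X₂ I ≠ 0 := by have := hNN I; omega
      obtain ⟨K, hK, hltK⟩ := hd₂ I hX₂I
      refine ⟨K, ?_, hltK⟩
      rw [Finsupp.add_apply, Finsupp.tsub_apply]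
      omega

end Aux

/-- Strict decrease of the measure across a completed local diagram: if `γ₁` is
nonempty and `|γ₁ δ₁| ≼′ |δ₀| + |γ₁|`, then `|δ₁| + |γ₂| ≺′ |δ₀| + |γ₁ γ₂|`. -/
theorem wordMeas_strict_decrease {P : Type*} (lt : P → P → Prop)
    (hirr : ∀ p : P, ¬ lt p p)
    (htrans : ∀ p q r : P, lt p q → lt q r → lt p r)
    (hwf : WellFounded lt)
    (δ₀ γ₁ δ₁ γ₂ : List P) (hγ₁ : γ₁ ≠ [])
    (h : DMLe lt (wordMeas lt (γ₁ ++ δ₁)) (wordMeas lt δ₀ + wordMeas lt γ₁)) :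
    DMLt lt (wordMeas lt δ₁ + wordMeas lt γ₂)
      (wordMeas lt δ₀ + wordMeas lt (γ₁ ++ γ₂)) := by
  set A := restrW lt γ₁ (wordMeas lt δ₁) with hA
  set B := restrW lt γ₁ (wordMeas lt γ₂) with hB
  set r := wordMeas lt δ₁ - A with hr
  set s := wordMeas lt γ₂ - B with hs
  have hAle : A ≤ wordMeas lt δ₁ := fun K => restrW_le lt γ₁ _ K
  have hBle : B ≤ wordMeas lt γ₂ := fun K => restrW_le lt γ₁ _ K
  have hδ₁ : wordMeas lt δ₁ = A + r := (add_tsub_cancel_of_le hAle).symm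
  have hγ₂ : wordMeas lt γ₂ = B + s := (add_tsub_cancel_of_le hBle).symm
  have hc1 : wordMeas lt (γ₁ ++ δ₁) = wordMeas lt γ₁ + A := meas_append lt htrans γ₁ δ₁
  have hc2 : wordMeas lt (γ₁ ++ γ₂) = wordMeas lt γ₁ + B := meas_append lt htrans γ₁ γ₂
  have hdom : ∀ (ν : P →₀ ℕ) (K : P), restrW lt γ₁ ν K ≠ ν K →
      ∃ J, wordMeas lt γ₁ J ≠ 0 ∧ lt K J := by
    intro ν K hne
    obtain ⟨I, hI, hKI⟩ := restrW_changed lt γ₁ ν K hne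
    obtain ⟨J, hJ, hor⟩ := mem_dominated lt γ₁.length γ₁ le_rfl I hI
    refine ⟨J, hJ, ?_⟩
    rcases hor with rfl | hIJ
    · exact hKI
    · exact htrans _ _ _ hKI hIJ
  have hγ₁ne : wordMeas lt γ₁ ≠ 0 := wordMeas_ne_zero lt γ₁ hγ₁
  have hrd : ∀ I, r I ≠ 0 → ∃ J, wordMeas lt γ₁ J ≠ 0 ∧ lt I J := by
    intro I hI
    apply hdom (wordMeas lt δ₁) I
    rw [← hA]
    have h1 : r I = wordMeas lt δ₁ I - A I := by rw [hr, Finsupp.tsub_apply]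
    omega
  have hsd : ∀ I, s I ≠ 0 → ∃ J, wordMeas lt γ₁ J ≠ 0 ∧ lt I J := by
    intro I hI
    apply hdom (wordMeas lt γ₂) I
    rw [← hB]
    have h1 : s I = wordMeas lt γ₂ I - B I := by rw [hs, Finsupp.tsub_apply]
    omega
  have step1 : DMLt lt (wordMeas lt δ₁ + wordMeas lt γ₂)
      ((A + B) + wordMeas lt γ₁) := by
    refine ⟨r + s, wordMeas lt γ₁, A + B, ?_, rfl, hγ₁ne, ?_⟩
    · rw [hδ₁, hγ₂]; abel
    · intro I hI
      rw [Finsupp.add_apply] at hI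
      rcases Nat.eq_zero_or_pos (r I) with h0 | hpos
      · exact hsd I (by omega)
      · exact hrd I (by omega)
  rcases h with hlt | heq
  · obtain ⟨X, Y, Z, hM, hN, hY, hd⟩ := hlt
    have step2 : DMLt lt ((A + B) + wordMeas lt γ₁)
        (wordMeas lt δ₀ + wordMeas lt (γ₁ ++ γ₂)) := by
      refine ⟨X, Y, Z + B, ?_, ?_, hY, fun I hI => hd I hI⟩
      · rw [hc1] at hM
        calc (A + B) + wordMeas lt γ₁ = (wordMeas lt γ₁ + A) + B := by abel
          _ = (Z + X) + B := by rw [hM]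
          _ = (Z + B) + X := by abel
      · rw [hc2]
        calc wordMeas lt δ₀ + (wordMeas lt γ₁ + B)
            = (wordMeas lt δ₀ + wordMeas lt γ₁) + B := by abel
          _ = (Z + Y) + B := by rw [hN]
          _ = (Z + B) + Y := by abel
    exact DMLt_trans lt htrans step1 step2
  · rw [hc1] at heq
    have hAeq : A = wordMeas lt δ₀ := by
      have : wordMeas lt γ₁ + A = wordMeas lt γ₁ + wordMeas lt δ₀ := by
        rw [heq]; abel
      exact add_left_cancel this
    refine ⟨r + s, wordMeas lt γ₁, wordMeas lt δ₀ + B, ?_, ?_, hγ₁ne, ?_⟩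
    · rw [hδ₁, hγ₂, hAeq]; abel
    · rw [hc2]; abel
    · intro I hI
      rw [Finsupp.add_apply] at hI
      rcases Nat.eq_zero_or_pos (r I) with h0 | hpos
      · exact hsd I (by omega)
      · exact hrd I (by omega)
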